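/- arXiv:2402.04022 — 2 statements merged into one kernel-verified Lean document; each statement's English description precedes it below -/
import Mathlib

section
/- Given 5 distinct real numbers t_1 < t_2 < t_3 < t_4 < t_5, the space of vectors (a_1,...,a_5) ∈ ℝ^5 satisfying Σ_{i=1}^5 a_i·(e^{-t_i}, t_i e^{-t_i}, e^{t_i}, t_i e^{t_i}) = (0,0,0,0) is exactly one-dimensional. -/
open scoped BigOperators

private lemma rolle_step (f f' : ℝ → ℝ) (hf : ∀ x, HasDerivAt f (f' x) x)
    {u v : ℝ} (huv : u < v) (hu : f u = 0) (hv : f v = 0) :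
    ∃ w, u < w ∧ w < v ∧ f' w = 0 := by
  obtain ⟨w, hw, hw'⟩ := exists_hasDerivAt_eq_zero huv
    (fun x _ => (hf x).continuousAt.continuousWithinAt) (hu.trans hv.symm)
    (fun x _ => hf x)
  exact ⟨w, hw.1, hw.2, hw'⟩

private lemma key_indep (a b c d : ℝ) (x : Fin 4 → ℝ) (hx : StrictMono x)
    (hz : ∀ i, a + b * x i + (c + d * x i) * Real.exp (2 * x i) = 0) :
    a = 0 ∧ b = 0 ∧ c = 0 ∧ d = 0 := by
  set g₀ : ℝ → ℝ := fun s => a + b * s + (c + d * s) * Real.exp (2 * s) with hg₀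
  set g₁ : ℝ → ℝ := fun s => b + (2 * c + d + 2 * d * s) * Real.exp (2 * s) with hg₁
  set g₂ : ℝ → ℝ := fun s => (4 * c + 4 * d + 4 * d * s) * Real.exp (2 * s) with hg₂
  have hexp : ∀ s : ℝ, HasDerivAt (fun u : ℝ => Real.exp (2 * u)) (2 * Real.exp (2 * s)) s := by
    intro s
    simpa [mul_comm] using ((hasDerivAt_id s).const_mul 2).exp
  have hD0 : ∀ s, HasDerivAt g₀ (g₁ s) s := by
    intro s
    have h1 : HasDerivAt (fun u : ℝ => a + b * u) b s := by
      simpa using ((hasDerivAt_id s).const_mul b).const_add a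
    have h2 : HasDerivAt (fun u : ℝ => (c + d * u) * Real.exp (2 * u))
        (d * Real.exp (2 * s) + (c + d * s) * (2 * Real.exp (2 * s))) s := by
      have hlin : HasDerivAt (fun u : ℝ => c + d * u) d s := by
        simpa using ((hasDerivAt_id s).const_mul d).const_add c
      exact hlin.mul (hexp s)
    have : HasDerivAt (fun u : ℝ => a + b * u + (c + d * u) * Real.exp (2 * u))
        (b + (d * Real.exp (2 * s) + (c + d * s) * (2 * Real.exp (2 * s)))) s := h1.add h2
    convert this using 1
    simp [hg₁]; ring
  have hD1 : ∀ s, HasDerivAt g₁ (g₂ s) s := by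
    intro s
    have hlin : HasDerivAt (fun u : ℝ => 2 * c + d + 2 * d * u) (2 * d) s := by
      simpa using ((hasDerivAt_id s).const_mul (2 * d)).const_add (2 * c + d)
    have h2 := hlin.mul (hexp s)
    have : HasDerivAt (fun u : ℝ => b + (2 * c + d + 2 * d * u) * Real.exp (2 * u))
        (0 + (2 * d * Real.exp (2 * s) + (2 * c + d + 2 * d * s) * (2 * Real.exp (2 * s)))) s :=
      (hasDerivAt_const s b).add h2
    convert this using 1
    simp [hg₂]; ring
  -- zeros of g₀ at x 0 < x 1 < x 2 < x 3
  have h01 : x 0 < x 1 := hx (by decide)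
  have h12 : x 1 < x 2 := hx (by decide)
  have h23 : x 2 < x 3 := hx (by decide)
  obtain ⟨y1, hy1l, hy1r, hy1⟩ := rolle_step g₀ g₁ hD0 h01 (hz 0) (hz 1)
  obtain ⟨y2, hy2l, hy2r, hy2⟩ := rolle_step g₀ g₁ hD0 h12 (hz 1) (hz 2)
  obtain ⟨y3, hy3l, hy3r, hy3⟩ := rolle_step g₀ g₁ hD0 h23 (hz 2) (hz 3)
  have hy12 : y1 < y2 := lt_trans hy1r hy2l
  have hy23 : y2 < y3 := lt_trans hy2r hy3l
  obtain ⟨z1, hz1l, hz1r, hz1⟩ := rolle_step g₁ g₂ hD1 hy12 hy1 hy2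
  obtain ⟨z2, hz2l, hz2r, hz2⟩ := rolle_step g₁ g₂ hD1 hy23 hy2 hy3
  have hz12 : z1 < z2 := lt_trans hz1r hz2l
  have hE1 : (0:ℝ) < Real.exp (2 * z1) := Real.exp_pos _
  have hE2 : (0:ℝ) < Real.exp (2 * z2) := Real.exp_pos _
  have e1 : 4 * c + 4 * d + 4 * d * z1 = 0 := by
    have := hz1
    simp only [hg₂] at this
    exact (mul_eq_zero.mp this).resolve_right (ne_of_gt hE1)
  have e2 : 4 * c + 4 * d + 4 * d * z2 = 0 := by
    have := hz2
    simp only [hg₂] at this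
    exact (mul_eq_zero.mp this).resolve_right (ne_of_gt hE2)
  have hd : d = 0 := by
    have : 4 * d * (z1 - z2) = 0 := by linarith
    have h4 : 4 * d = 0 := by
      rcases mul_eq_zero.mp this with h | h
      · exact h
      · exact absurd h (sub_ne_zero.mpr (ne_of_lt hz12))
    linarith
  have hc : c = 0 := by rw [hd] at e1; linarith
  have f0 : a + b * x 0 = 0 := by have := hz 0; simp [hg₀, hc, hd] at this; linarith
  have f1 : a + b * x 1 = 0 := by have := hz 1; simp [hg₀, hc, hd] at this; linarith
  have hb : b = 0 := by
    have : b * (x 0 - x 1) = 0 := by linarith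
    rcases mul_eq_zero.mp this with h | h
    · exact h
    · exact absurd h (sub_ne_zero.mpr (ne_of_lt h01))
  exact ⟨by rw [hb] at f0; linarith, hb, hc, hd⟩

theorem stmt_3 (t : Fin 5 → ℝ) (ht : StrictMono t) :
    Module.finrank ℝ
      (LinearMap.ker (Matrix.mulVecLin
        (Matrix.of fun (i : Fin 4) (j : Fin 5) =>
          ![Real.exp (-(t j)), t j * Real.exp (-(t j)),
            Real.exp (t j), t j * Real.exp (t j)] i))) = 1 := by
  set M : Matrix (Fin 4) (Fin 5) ℝ :=
    Matrix.of fun (i : Fin 4) (j : Fin 5) =>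
      ![Real.exp (-(t j)), t j * Real.exp (-(t j)),
        Real.exp (t j), t j * Real.exp (t j)] i with hM
  have hrows : LinearIndependent ℝ M := by
    refine Fintype.linearIndependent_iff.mpr ?_
    intro g hg i
    have hcoord : ∀ j : Fin 5,
        g 0 * Real.exp (-(t j)) + g 1 * (t j * Real.exp (-(t j)))
          + g 2 * Real.exp (t j) + g 3 * (t j * Real.exp (t j)) = 0 := by
      intro j
      have := congrFun hg j
      simpa [hM, Fin.sum_univ_four, Matrix.of_apply] using this
    -- convert to the exponential-polynomial form
    have hz : ∀ k : Fin 4, g 0 + g 1 * t (k.succ) +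
        (g 2 + g 3 * t (k.succ)) * Real.exp (2 * t (k.succ)) = 0 := by
      intro k
      set s := t (k.succ)
      have h := hcoord (k.succ)
      have hE : Real.exp (-s) ≠ 0 := (Real.exp_pos _).ne'
      have hsplit : Real.exp s = Real.exp (-s) * Real.exp (2 * s) := by
        rw [← Real.exp_add, two_mul, neg_add_cancel_left]
      have h2 : Real.exp (-s) * (g 0 + g 1 * s + (g 2 + g 3 * s) * Real.exp (2 * s)) = 0 := by
        rw [hsplit] at h
        linear_combination h
      exact (mul_eq_zero.mp h2).resolve_left hE
    have hmono : StrictMono (fun k : Fin 4 => t (k.succ)) := by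
      intro i j hij
      exact ht (Fin.succ_lt_succ_iff.mpr hij)
    obtain ⟨ha, hb, hc, hd⟩ := key_indep (g 0) (g 1) (g 2) (g 3) _ hmono hz
    fin_cases i <;> assumption
  have hrank : M.rank = 4 := by
    simpa using hrows.rank_matrix
  have hrn := LinearMap.finrank_range_add_finrank_ker M.mulVecLin
  have hdom : Module.finrank ℝ (Fin 5 → ℝ) = 5 := by simp
  have hr : Module.finrank ℝ (LinearMap.range M.mulVecLin) = 4 := hrank
  omega
end

section
/- Let F : ℝ → Matrix(m,m,ℝ) be continuous with trace F(t) = 0 for all t, let B = (0,...,0,1)ᵀ ∈ ℝ^m, and let Π : ℝ → Matrix(m,m,ℝ) be differentiable satisfying Π'(t) = F(t)Π(t) + Π(t)F(t)ᵀ + BBᵀ. Then the derivative of det Π(t) equals the determinant of the top-left (m−1)×(m−1) submatrix of Π(t). -/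
open Matrix Finset


lemma jacobi_deriv {n : ℕ} (A : ℝ → Matrix (Fin n) (Fin n) ℝ)
    (A' : Matrix (Fin n) (Fin n) ℝ) (t : ℝ)
    (h : ∀ i j, HasDerivAt (fun s => A s i j) (A' i j) t) :
    HasDerivAt (fun s => (A s).det)
      (((adjugate (A t)) * A').trace) t := by
  have key : HasDerivAt (fun s => (A s).det)
      (∑ σ : Equiv.Perm (Fin n), (Equiv.Perm.sign σ : ℝ) *
        ∑ i, (∏ j ∈ Finset.univ.erase i, A t (σ j) j) • A' (σ i) i) t := by
    simp only [Matrix.det_apply']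
    exact HasDerivAt.fun_sum fun σ _ =>
      ((HasDerivAt.fun_finsetProd fun i _ => h (σ i) i).const_mul _)
  convert key using 1
  -- trace (adjugate (A t) * A') = ∑ i det (updateCol (A t) i (col i of A'))
  have hcr : ∀ i : Fin n, ((adjugate (A t)) *ᵥ (fun k => A' k i)) i
      = ((A t).updateCol i fun k => A' k i).det := by
    intro i
    rw [← cramer_eq_adjugate_mulVec, cramer_apply]
  calc ((adjugate (A t)) * A').trace
      = ∑ i, ((A t).updateCol i fun k => A' k i).det := by
        refine Finset.sum_congr rfl fun i _ => ?_
        rw [← hcr i]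
        simp [Matrix.mul_apply, Matrix.mulVec, dotProduct]
    _ = _ := by
        simp only [Matrix.det_apply']
        rw [Finset.sum_comm]
        refine Finset.sum_congr rfl fun σ _ => ?_
        rw [Finset.mul_sum]
        refine Finset.sum_congr rfl fun i _ => ?_
        rw [← Finset.mul_prod_erase Finset.univ _ (Finset.mem_univ i)]
        have : ∀ j ∈ Finset.univ.erase i,
            ((A t).updateCol i fun k => A' k i) (σ j) j = A t (σ j) j := by
          intro j hj
          rw [Matrix.updateCol_apply, if_neg (Finset.ne_of_mem_erase hj)]
        rw [Finset.prod_congr rfl this, Matrix.updateCol_apply, if_pos rfl]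
        simp [mul_comm, mul_assoc, mul_left_comm]


theorem stmt_7 (m : ℕ)
    (F : ℝ → Matrix (Fin (m + 1)) (Fin (m + 1)) ℝ)
    (hFcont : ∀ i j, Continuous fun t => F t i j)
    (hFtr : ∀ t, (F t).trace = 0)
    (B : Fin (m + 1) → ℝ) (hB : B = Pi.single (Fin.last m) 1)
    (P : ℝ → Matrix (Fin (m + 1)) (Fin (m + 1)) ℝ)
    (hP : ∀ t i j, HasDerivAt (fun s => P s i j)
      ((F t * P t + P t * (F t)ᵀ + vecMulVec B B) i j) t) :
    ∀ t : ℝ, deriv (fun s => (P s).det) t =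
      ((P t).submatrix (Fin.castSucc : Fin m → Fin (m + 1)) Fin.castSucc).det := by
  intro t
  have hd := jacobi_deriv P (F t * P t + P t * (F t)ᵀ + vecMulVec B B) t
    (fun i j => hP t i j)
  rw [hd.deriv]
  have h1 : (adjugate (P t) * (F t * P t)).trace = 0 := by
    rw [show adjugate (P t) * (F t * P t) = adjugate (P t) * F t * P t by
      rw [Matrix.mul_assoc], trace_mul_cycle, mul_adjugate,
      Matrix.smul_mul, Matrix.one_mul, trace_smul, hFtr, smul_zero]
  have h2 : (adjugate (P t) * (P t * (F t)ᵀ)).trace = 0 := by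
    rw [← Matrix.mul_assoc, adjugate_mul, Matrix.smul_mul, Matrix.one_mul,
      trace_smul, trace_transpose, hFtr, smul_zero]
  have h3 : (adjugate (P t) * vecMulVec B B).trace
      = adjugate (P t) (Fin.last m) (Fin.last m) := by
    subst hB
    simp only [Matrix.trace, Matrix.diag, Matrix.mul_apply, vecMulVec_apply]
    rw [Finset.sum_eq_single (Fin.last m)]
    · rw [Finset.sum_eq_single (Fin.last m)]
      · simp
      · intro k _ hk; simp [Pi.single_apply, hk]
      · simp
    · intro i _ hi
      simp [Pi.single_apply, hi]
    · simp
  rw [Matrix.mul_add, Matrix.mul_add, trace_add, trace_add, h1, h2, h3,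
    zero_add, zero_add]
  -- adjugate (P t) last last = det of top-left submatrix
  rw [adjugate_apply]
  rw [Matrix.det_succ_row _ (Fin.last m)]
  rw [Finset.sum_eq_single (Fin.last m)]
  · rw [Matrix.updateRow_self]
    simp only [Pi.single_eq_same, mul_one]
    rw [show ((-1 : ℝ)) ^ ((Fin.last m : ℕ) + (Fin.last m : ℕ)) = 1 by
      rw [← two_mul, pow_mul]; simp]
    rw [one_mul]
    congr 1
    ext i j
    simp [Fin.succAbove_last, Matrix.updateRow_apply,
      (Fin.castSucc_lt_last i).ne]
  · intro j _ hj
    rw [Matrix.updateRow_self]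
    simp [Pi.single_apply, hj]
  · simp
end
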